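/- With the automata A₁, …, Aₙ as defined (six-state counting automata over Γ ∪ Σ, Γ = {a₁,…,aₙ}), the language Lₙ recognized by the parallel composition Aₙ ‖ ⋯ ‖ A₁ satisfies: Lₙ ⊆ (ΓΣ)^{2ⁿ−1} (every accepted word strictly alternates one event of Γ with one event of Σ, with 2ⁿ−1 such pairs), and the projection of Lₙ to Γ is a singleton (all accepted words have the same Γ-projection). -/

import Mathlib

/-- An NFA with marked states. -/
structure NFAm (Q E : Type) where
  δ : Q → E → Set Q
  I : Set Q
  F : Set Q

/-- Extended transition function on sets of states. -/
def NFAm.run {Q E : Type} (A : NFAm Q E) : List E → Set Q → Set Q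
  | [], S => S
  | a :: w, S => A.run w {q | ∃ p ∈ S, q ∈ A.δ p a}

/-- The language recognized (marked) by the automaton. -/
def NFAm.Lm {Q E : Type} (A : NFAm Q E) : Set (List E) :=
  {w | (A.run w A.I ∩ A.F).Nonempty}

/-- Fully synchronous product of a family of NFAs over a common alphabet. -/
def prodN {n : ℕ} {E : Type} {Qs : Fin n → Type} (A : ∀ i, NFAm (Qs i) E) :
    NFAm (∀ i, Qs i) E where
  δ := fun p a => {q | ∀ i, q i ∈ (A i).δ (p i) a}
  I := {p | ∀ i, p i ∈ (A i).I}
  F := {p | ∀ i, p i ∈ (A i).F}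

/-- Natural projection of a word over `Σ ⊕ Γ` to `Σ` (erasing the `Γ`-events). -/
def projL {E F : Type} : List (E ⊕ F) → List E :=
  List.filterMap (Sum.elim some fun _ => none)

/-- Natural projection of a word over `Σ ⊕ Γ` to `Γ` (erasing the `Σ`-events). -/
def projR {E F : Type} : List (E ⊕ F) → List F :=
  List.filterMap (Sum.elim (fun _ => none) some)

/-- The six states of the counting automata `Aᵢ`. -/
inductive St : Type
  | z | o | p | q | r | s
  deriving DecidableEq

instance : Fintype St where
  elems := {St.z, St.o, St.p, St.q, St.r, St.s}
  complete := fun x => by cases x <;> simp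

/-- The six-state counting automaton `Aᵢ` (0-based index `i : Fin n`) over
`Sig ⊕ Fin n`, with `Sum.inr j` playing the role of `aⱼ`; `z` is the state `0`,
`o` is the state `1`, the initial state is `0` and the marked state is `1`. -/
def Acount {Sig : Type} (n : ℕ) (i : Fin n) : NFAm St (Sig ⊕ Fin n) where
  δ := fun st e =>
    match st, e with
    | .z, .inr j => if j < i then {St.p} else if j = i then {St.r} else ∅
    | .p, .inl _ => {St.z}
    | .o, .inr j => if j < i then {St.q} else if i < j then {St.s} else ∅
    | .q, .inl _ => {St.o}
    | .r, .inl _ => {St.o}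
    | .s, .inl _ => {St.z}
    | _, _ => ∅
  I := {St.z}
  F := {St.o}

section CountingAuto

variable {Sig : Type} {n : ℕ}

/-- The stable configuration encoded by a bit vector. -/
def cfgb (b : Fin n → Bool) : Fin n → St := fun i => if b i then St.o else St.z

/-- The intermediate configuration after reading `aⱼ` from `cfgb b`. -/
def midc (b : Fin n → Bool) (j : Fin n) : Fin n → St :=
  fun i => if i < j then St.s else if i = j then St.r else if b i then St.q else St.p

/-- Binary increment with carry position `j`. -/
def incr (b : Fin n → Bool) (j : Fin n) : Fin n → Bool :=
  fun i => if i < j then false else if i = j then true else b i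

/-- `aⱼ` is enabled at configuration `b`. -/
def enb (b : Fin n → Bool) (j : Fin n) : Prop :=
  (∀ i, i < j → b i = true) ∧ b j = false

/-- The binary value of a configuration. -/
def valb (b : Fin n → Bool) : ℕ := ∑ i : Fin n, if b i then 2 ^ (i : ℕ) else 0

/-- The product automaton. -/
def PA (Sig : Type) (n : ℕ) : NFAm (Fin n → St) (Sig ⊕ Fin n) :=
  prodN (fun i : Fin n => Acount (Sig := Sig) n i)

/-- Acceptance from the stable configuration `b`. -/
def AccM (b : Fin n → Bool) (w : List (Sig ⊕ Fin n)) : Prop :=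
  (((PA Sig n).run w {cfgb b}) ∩ (PA Sig n).F).Nonempty

lemma run_nil {Q E : Type} (A : NFAm Q E) (S : Set Q) : A.run [] S = S := rfl

lemma run_cons {Q E : Type} (A : NFAm Q E) (a : E) (w : List E) (S : Set Q) :
    A.run (a :: w) S = A.run w {q | ∃ p ∈ S, q ∈ A.δ p a} := rfl

lemma run_empty {Q E : Type} (A : NFAm Q E) : ∀ w : List E, A.run w ∅ = ∅
  | [] => rfl
  | a :: w => by
      rw [run_cons]
      have h : {q | ∃ p ∈ (∅ : Set Q), q ∈ A.δ p a} = ∅ := by simp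
      rw [h]; exact run_empty A w

-- component transition computations
lemma d_z_inr (i j : Fin n) : (Acount (Sig := Sig) n i).δ St.z (Sum.inr j)
    = if j < i then {St.p} else if j = i then {St.r} else ∅ := rfl
lemma d_o_inr (i j : Fin n) : (Acount (Sig := Sig) n i).δ St.o (Sum.inr j)
    = if j < i then {St.q} else if i < j then {St.s} else ∅ := rfl
lemma d_z_inl (i : Fin n) (σ : Sig) : (Acount (Sig := Sig) n i).δ St.z (Sum.inl σ) = ∅ := rfl
lemma d_o_inl (i : Fin n) (σ : Sig) : (Acount (Sig := Sig) n i).δ St.o (Sum.inl σ) = ∅ := rfl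
lemma d_p_inl (i : Fin n) (σ : Sig) : (Acount (Sig := Sig) n i).δ St.p (Sum.inl σ) = {St.z} := rfl
lemma d_q_inl (i : Fin n) (σ : Sig) : (Acount (Sig := Sig) n i).δ St.q (Sum.inl σ) = {St.o} := rfl
lemma d_r_inl (i : Fin n) (σ : Sig) : (Acount (Sig := Sig) n i).δ St.r (Sum.inl σ) = {St.o} := rfl
lemma d_s_inl (i : Fin n) (σ : Sig) : (Acount (Sig := Sig) n i).δ St.s (Sum.inl σ) = {St.z} := rfl
lemma d_r_inr (i j : Fin n) : (Acount (Sig := Sig) n i).δ St.r (Sum.inr j) = ∅ := rfl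

lemma cfgb_of_true {b : Fin n → Bool} {i : Fin n} (h : b i = true) : cfgb b i = St.o := by
  simp [cfgb, h]
lemma cfgb_of_false {b : Fin n → Bool} {i : Fin n} (h : b i = false) : cfgb b i = St.z := by
  simp [cfgb, h]

lemma step_inr_pos {b : Fin n → Bool} {j : Fin n} (h : enb b j) :
    {x | ∃ p ∈ ({cfgb b} : Set (Fin n → St)), x ∈ (PA Sig n).δ p (Sum.inr j)}
      = {midc b j} := by
  ext x
  simp only [Set.mem_setOf_eq, Set.mem_singleton_iff, exists_eq_left]
  show x ∈ (PA Sig n).δ (cfgb b) (Sum.inr j) ↔ x = midc b j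
  simp only [PA, prodN, Set.mem_setOf_eq]
  constructor
  · intro hx
    funext i
    have hi := hx i
    rcases lt_trichotomy i j with hij | hij | hij
    · rw [cfgb_of_true (h.1 i hij), d_o_inr, if_neg (asymm hij), if_pos hij] at hi
      rw [Set.mem_singleton_iff.mp hi]
      simp [midc, hij]
    · subst hij
      rw [cfgb_of_false h.2, d_z_inr, if_neg (lt_irrefl i), if_pos rfl] at hi
      rw [Set.mem_singleton_iff.mp hi]
      simp [midc]
    · cases hb : b i
      · rw [cfgb_of_false hb, d_z_inr, if_pos hij] at hi
        rw [Set.mem_singleton_iff.mp hi]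
        simp [midc, asymm hij, hij.ne', hb]
      · rw [cfgb_of_true hb, d_o_inr, if_pos hij] at hi
        rw [Set.mem_singleton_iff.mp hi]
        simp [midc, asymm hij, hij.ne', hb]
  · rintro rfl
    intro i
    rcases lt_trichotomy i j with hij | hij | hij
    · rw [cfgb_of_true (h.1 i hij), d_o_inr, if_neg (asymm hij), if_pos hij]
      simp [midc, hij]
    · subst hij
      rw [cfgb_of_false h.2, d_z_inr, if_neg (lt_irrefl i), if_pos rfl]
      simp [midc]
    · cases hb : b i
      · rw [cfgb_of_false hb, d_z_inr, if_pos hij]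
        simp [midc, asymm hij, hij.ne', hb]
      · rw [cfgb_of_true hb, d_o_inr, if_pos hij]
        simp [midc, asymm hij, hij.ne', hb]

lemma step_inr_neg {b : Fin n → Bool} {j : Fin n} (h : ¬ enb b j) :
    {x | ∃ p ∈ ({cfgb b} : Set (Fin n → St)), x ∈ (PA Sig n).δ p (Sum.inr j)}
      = (∅ : Set (Fin n → St)) := by
  ext x
  simp only [Set.mem_setOf_eq, Set.mem_empty_iff_false, iff_false]
  intro hx
  obtain ⟨p, hp, hxd⟩ := hx
  rw [Set.mem_singleton_iff] at hp
  subst hp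
  have hx2 : ∀ i, x i ∈ (Acount (Sig := Sig) n i).δ (cfgb b i) (Sum.inr j) := hxd
  by_cases hbj : b j = false
  · have hno : ¬ ∀ i, i < j → b i = true := fun hall => h ⟨hall, hbj⟩
    push_neg at hno
    obtain ⟨i, hij, hbi⟩ := hno
    have hi := hx2 i
    rw [cfgb_of_false (by simpa using hbi), d_z_inr, if_neg (asymm hij),
      if_neg hij.ne'] at hi
    exact hi
  · have hi := hx2 j
    rw [cfgb_of_true (by simpa using hbj), d_o_inr, if_neg (lt_irrefl j),
      if_neg (lt_irrefl j)] at hi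
    exact hi

lemma step_inl_mid {b : Fin n → Bool} {j : Fin n} (σ : Sig) :
    {x | ∃ p ∈ ({midc b j} : Set (Fin n → St)), x ∈ (PA Sig n).δ p (Sum.inl σ)}
      = {cfgb (incr b j)} := by
  ext x
  simp only [Set.mem_setOf_eq, Set.mem_singleton_iff, exists_eq_left]
  show x ∈ (PA Sig n).δ (midc b j) (Sum.inl σ) ↔ x = cfgb (incr b j)
  simp only [PA, prodN, Set.mem_setOf_eq]
  constructor
  · intro hx
    funext i
    have hi := hx i
    rcases lt_trichotomy i j with hij | hij | hij
    · rw [show midc b j i = St.s by simp [midc, hij], d_s_inl] at hi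
      rw [Set.mem_singleton_iff.mp hi]
      simp [cfgb, incr, hij]
    · rw [show midc b j i = St.r by simp [midc, hij], d_r_inl] at hi
      rw [Set.mem_singleton_iff.mp hi]
      simp [cfgb, incr, hij]
    · cases hb : b i
      · rw [show midc b j i = St.p by
          simp [midc, asymm hij, hij.ne', hb], d_p_inl] at hi
        rw [Set.mem_singleton_iff.mp hi]
        simp [cfgb, incr, asymm hij, hij.ne', hb]
      · rw [show midc b j i = St.q by
          simp [midc, asymm hij, hij.ne', hb], d_q_inl] at hi
        rw [Set.mem_singleton_iff.mp hi]
        simp [cfgb, incr, asymm hij, hij.ne', hb]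
  · rintro rfl
    intro i
    rcases lt_trichotomy i j with hij | hij | hij
    · rw [show midc b j i = St.s by simp [midc, hij], d_s_inl]
      simp [cfgb, incr, hij]
    · rw [show midc b j i = St.r by simp [midc, hij], d_r_inl]
      simp [cfgb, incr, hij]
    · cases hb : b i
      · rw [show midc b j i = St.p by
          simp [midc, asymm hij, hij.ne', hb], d_p_inl]
        simp [cfgb, incr, asymm hij, hij.ne', hb]
      · rw [show midc b j i = St.q by
          simp [midc, asymm hij, hij.ne', hb], d_q_inl]
        simp [cfgb, incr, asymm hij, hij.ne', hb]

lemma step_inl_cfg (hn : 0 < n) (b : Fin n → Bool) (σ : Sig) :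
    {x | ∃ p ∈ ({cfgb b} : Set (Fin n → St)), x ∈ (PA Sig n).δ p (Sum.inl σ)}
      = (∅ : Set (Fin n → St)) := by
  ext x
  simp only [Set.mem_setOf_eq, Set.mem_empty_iff_false, iff_false]
  intro hx
  obtain ⟨p, hp, hxd⟩ := hx
  rw [Set.mem_singleton_iff] at hp
  subst hp
  have hx2 : ∀ i, x i ∈ (Acount (Sig := Sig) n i).δ (cfgb b i) (Sum.inl σ) := hxd
  have hi := hx2 ⟨0, hn⟩
  cases hb : b ⟨0, hn⟩
  · rw [cfgb_of_false hb, d_z_inl] at hi; exact hi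
  · rw [cfgb_of_true hb, d_o_inl] at hi; exact hi

lemma step_inr_mid (b : Fin n → Bool) (j j' : Fin n) :
    {x | ∃ p ∈ ({midc b j} : Set (Fin n → St)), x ∈ (PA Sig n).δ p (Sum.inr j')}
      = (∅ : Set (Fin n → St)) := by
  ext x
  simp only [Set.mem_setOf_eq, Set.mem_empty_iff_false, iff_false]
  intro hx
  obtain ⟨p, hp, hxd⟩ := hx
  rw [Set.mem_singleton_iff] at hp
  subst hp
  have hx2 : ∀ i, x i ∈ (Acount (Sig := Sig) n i).δ (midc b j i) (Sum.inr j') := hxd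
  have hi := hx2 j
  rw [show midc b j j = St.r by simp [midc], d_r_inr] at hi
  exact hi

lemma mem_F_iff (x : Fin n → St) : x ∈ (PA Sig n).F ↔ ∀ i, x i = St.o := by
  simp only [PA, prodN, Set.mem_setOf_eq]
  constructor
  · intro h i; exact Set.mem_singleton_iff.mp (h i)
  · intro h i; exact Set.mem_singleton_iff.mpr (h i)

lemma accm_decomp (hn : 0 < n) {b : Fin n → Bool} {w : List (Sig ⊕ Fin n)} (hw : AccM b w) :
    (w = [] ∧ ∀ i, b i = true) ∨
    ∃ j σ w', w = Sum.inr j :: Sum.inl σ :: w' ∧ enb b j ∧ AccM (incr b j) w' := by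
  rcases w with _ | ⟨(σ | j), w⟩
  · left
    refine ⟨rfl, ?_⟩
    obtain ⟨x, hx, hF⟩ := hw
    have hxe : x = cfgb b := hx
    subst hxe
    intro i
    have := (mem_F_iff _).mp hF i
    cases hb : b i
    · rw [cfgb_of_false hb] at this; exact absurd this (by simp)
    · rfl
  · exfalso
    unfold AccM at hw
    rw [run_cons, step_inl_cfg hn, run_empty] at hw
    simp at hw
  · by_cases he : enb b j
    · rcases w with _ | ⟨(σ | j'), w⟩
      · exfalso
        unfold AccM at hw
        rw [run_cons, step_inr_pos he, run_nil] at hw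
        obtain ⟨x, hx, hF⟩ := hw
        have hxe : x = midc b j := hx
        subst hxe
        have := (mem_F_iff _).mp hF j
        rw [show midc b j j = St.r by simp [midc]] at this
        exact absurd this (by simp)
      · right
        refine ⟨j, σ, w, rfl, he, ?_⟩
        unfold AccM at hw ⊢
        rw [run_cons, step_inr_pos he, run_cons, step_inl_mid σ] at hw
        exact hw
      · exfalso
        unfold AccM at hw
        rw [run_cons, step_inr_pos he, run_cons, step_inr_mid, run_empty] at hw
        simp at hw
    · exfalso
      unfold AccM at hw
      rw [run_cons, step_inr_neg he, run_empty] at hw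
      simp at hw

lemma enb_uniq {b : Fin n → Bool} {j j' : Fin n} (h : enb b j) (h' : enb b j') : j = j' := by
  rcases lt_trichotomy j j' with hh | hh | hh
  · exact absurd (h'.1 j hh) (by simp [h.2])
  · exact hh
  · exact absurd (h.1 j' hh) (by simp [h'.2])

lemma two_pow_sum (m : ℕ) : ∑ i ∈ Finset.range m, 2 ^ i = 2 ^ m - 1 := by
  induction m with
  | zero => simp
  | succ k ih =>
    rw [Finset.sum_range_succ, ih, pow_succ]
    have : 1 ≤ 2 ^ k := Nat.one_le_two_pow
    omega

lemma valb_top {b : Fin n → Bool} (h : ∀ i, b i = true) : valb b = 2 ^ n - 1 := by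
  unfold valb
  rw [Finset.sum_congr rfl (fun i _ => by rw [if_pos (h i)])]
  rw [Fin.sum_univ_eq_sum_range (fun i => 2 ^ i) n, two_pow_sum]

lemma valb_bot : valb (fun _ : Fin n => false) = 0 := by simp [valb]

lemma valb_lt {b : Fin n → Bool} {j : Fin n} (h : b j = false) : valb b < 2 ^ n - 1 := by
  have hlt : valb b < ∑ i : Fin n, 2 ^ (i : ℕ) := by
    apply Finset.sum_lt_sum (fun i _ => by split <;> simp)
    exact ⟨j, Finset.mem_univ j, by rw [if_neg (by simp [h])]; positivity⟩
  rwa [Fin.sum_univ_eq_sum_range (fun i => 2 ^ i) n, two_pow_sum] at hlt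

lemma valb_incr {b : Fin n → Bool} {j : Fin n} (h : enb b j) :
    valb (incr b j) = valb b + 1 := by
  have key : ∀ i : Fin n,
      (if incr b j i then 2 ^ (i : ℕ) else 0) + (if i < j then 2 ^ (i : ℕ) else 0)
        = (if b i then 2 ^ (i : ℕ) else 0) + (if i = j then 2 ^ (i : ℕ) else 0) := by
    intro i
    rcases lt_trichotomy i j with hij | hij | hij
    · rw [if_pos hij, if_neg (Fin.ne_of_lt hij), if_pos (h.1 i hij),
        show incr b j i = false by simp [incr, hij]]
      simp [Nat.add_comm]
    · have e1 : incr b j i = true := by simp [incr, hij]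
      have e2 : b i = false := by rw [hij]; exact h.2
      rw [e1, e2, if_pos hij, if_neg (show ¬ i < j by rw [hij]; exact lt_irrefl j)]
      simp
    · rw [if_neg (asymm hij), if_neg hij.ne',
        show incr b j i = b i by simp [incr, asymm hij, hij.ne']]
  have hsum : valb (incr b j) + ∑ i : Fin n, (if i < j then 2 ^ (i : ℕ) else 0)
      = valb b + ∑ i : Fin n, (if i = j then 2 ^ (i : ℕ) else 0) := by
    unfold valb
    rw [← Finset.sum_add_distrib, ← Finset.sum_add_distrib]
    exact Finset.sum_congr rfl (fun i _ => key i)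
  have h1 : ∑ i : Fin n, (if i = j then 2 ^ (i : ℕ) else 0) = 2 ^ (j : ℕ) := by
    rw [Finset.sum_ite_eq' Finset.univ j (fun i => 2 ^ (i : ℕ)),
      if_pos (Finset.mem_univ j)]
  have h2 : ∑ i : Fin n, (if i < j then 2 ^ (i : ℕ) else 0) = 2 ^ (j : ℕ) - 1 := by
    have e1 : ∀ i : Fin n, (if i < j then 2 ^ (i : ℕ) else 0)
        = (fun m : ℕ => if m < (j : ℕ) then 2 ^ m else 0) (i : ℕ) := by
      intro i; simp only [Fin.lt_def]
    rw [Finset.sum_congr rfl (fun i _ => e1 i),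
      Fin.sum_univ_eq_sum_range (fun m => if m < (j : ℕ) then 2 ^ m else 0) n,
      Finset.sum_ite, Finset.sum_const_zero, add_zero]
    have e2 : (Finset.range n).filter (fun m => m < (j : ℕ)) = Finset.range (j : ℕ) := by
      ext m
      simp only [Finset.mem_filter, Finset.mem_range]
      have := j.isLt
      omega
    rw [e2, two_pow_sum]
  rw [h1, h2] at hsum
  have : 1 ≤ 2 ^ (j : ℕ) := Nat.one_le_two_pow
  omega

lemma acc_shape (hn : 0 < n) :
    ∀ m (w : List (Sig ⊕ Fin n)) (b : Fin n → Bool), w.length ≤ m → AccM b w →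
      ∃ l : List (Fin n × Sig),
        w = (l.map fun pr => [Sum.inr pr.1, Sum.inl pr.2]).flatten ∧
        valb b + l.length = 2 ^ n - 1 := by
  intro m
  induction m with
  | zero =>
    intro w b hlen hw
    rcases accm_decomp hn hw with ⟨rfl, hb⟩ | ⟨j, σ, w', rfl, _, _⟩
    · exact ⟨[], by simp, by simp [valb_top hb]⟩
    · simp at hlen
  | succ k ih =>
    intro w b hlen hw
    rcases accm_decomp hn hw with ⟨rfl, hb⟩ | ⟨j, σ, w', rfl, he, hw'⟩
    · exact ⟨[], by simp, by simp [valb_top hb]⟩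
    · have hlen' : w'.length ≤ k := by simp at hlen; omega
      obtain ⟨l, hl, hv⟩ := ih w' (incr b j) hlen' hw'
      refine ⟨(j, σ) :: l, by simp [hl], ?_⟩
      rw [valb_incr he] at hv
      simp only [List.length_cons]
      omega

lemma projR_cons_inr (j : Fin n) (w : List (Sig ⊕ Fin n)) :
    projR (Sum.inr j :: w) = j :: projR w := by simp [projR]

lemma projR_cons_inl (σ : Sig) (w : List (Sig ⊕ Fin n)) :
    projR (Sum.inl σ :: w) = projR w := by simp [projR]; rfl

lemma acc_uniq (hn : 0 < n) :
    ∀ m (w1 w2 : List (Sig ⊕ Fin n)) (b : Fin n → Bool), w1.length ≤ m →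
      AccM b w1 → AccM b w2 → projR w1 = projR w2 := by
  intro m
  induction m with
  | zero =>
    intro w1 w2 b hlen h1 h2
    rcases accm_decomp hn h1 with ⟨rfl, hb⟩ | ⟨j, σ, w', rfl, _, _⟩
    · rcases accm_decomp hn h2 with ⟨rfl, _⟩ | ⟨j', σ', w2', rfl, he', _⟩
      · rfl
      · exact absurd (hb j') (by simp [he'.2])
    · simp at hlen
  | succ k ih =>
    intro w1 w2 b hlen h1 h2
    rcases accm_decomp hn h1 with ⟨rfl, hb⟩ | ⟨j, σ, w1', rfl, he, hw1'⟩
    · rcases accm_decomp hn h2 with ⟨rfl, _⟩ | ⟨j', σ', w2', rfl, he', _⟩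
      · rfl
      · exact absurd (hb j') (by simp [he'.2])
    · rcases accm_decomp hn h2 with ⟨rfl, hb⟩ | ⟨j', σ', w2', rfl, he', hw2'⟩
      · exact absurd (hb j) (by simp [he.2])
      · have hjj : j = j' := enb_uniq he he'
        subst hjj
        have hlen' : w1'.length ≤ k := by simp at hlen; omega
        have := ih w1' w2' (incr b j) hlen' hw1' hw2'
        rw [projR_cons_inr, projR_cons_inl, projR_cons_inr, projR_cons_inl, this]

lemma acc_exists (hn : 0 < n) (σ0 : Sig) :
    ∀ k (b : Fin n → Bool), valb b + k = 2 ^ n - 1 →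
      ∃ w : List (Sig ⊕ Fin n), AccM b w := by
  intro k
  induction k with
  | zero =>
    intro b hv
    have hb : ∀ i, b i = true := by
      intro i
      by_contra hbi
      have : b i = false := by simpa using hbi
      have := valb_lt this
      omega
    refine ⟨[], cfgb b, rfl, ?_⟩
    rw [mem_F_iff]
    intro i
    exact cfgb_of_true (hb i)
  | succ k ih =>
    intro b hv
    have hne : ∃ i, b i = false := by
      by_contra hall
      push_neg at hall
      have : ∀ i, b i = true := by
        intro i
        cases hbi : b i
        · exact absurd hbi (hall i)
        · rfl
      have := valb_top this
      omega
    obtain ⟨i0, hi0⟩ := hne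
    let s := Finset.univ.filter (fun i : Fin n => b i = false)
    have hs : s.Nonempty := ⟨i0, by simp [s, hi0]⟩
    set j := s.min' hs with hj
    have hjmem : b j = false := by
      have := s.min'_mem hs
      simp [s] at this
      exact this
    have he : enb b j := by
      refine ⟨?_, hjmem⟩
      intro i hij
      by_contra hbi
      have hbi' : b i = false := by simpa using hbi
      have : j ≤ i := Finset.min'_le s i (by simp [s, hbi'])
      exact absurd hij (not_lt.mpr this)
    have hv' : valb (incr b j) + k = 2 ^ n - 1 := by
      rw [valb_incr he]; omega
    obtain ⟨w', hw'⟩ := ih (incr b j) hv'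
    refine ⟨Sum.inr j :: Sum.inl σ0 :: w', ?_⟩
    unfold AccM
    rw [run_cons, step_inr_pos he, run_cons, step_inl_mid σ0]
    exact hw'

lemma I_eq : (PA Sig n).I = {cfgb (fun _ : Fin n => false)} := by
  ext p
  simp only [PA, prodN, Set.mem_setOf_eq, Set.mem_singleton_iff]
  constructor
  · intro h
    funext i
    have := Set.mem_singleton_iff.mp (h i)
    rw [this, cfgb_of_false rfl]
  · rintro rfl
    intro i
    rw [cfgb_of_false rfl]
    rfl

lemma mem_Lm_iff (w : List (Sig ⊕ Fin n)) :
    w ∈ (PA Sig n).Lm ↔ AccM (fun _ : Fin n => false) w := by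
  unfold NFAm.Lm AccM
  rw [Set.mem_setOf_eq, I_eq]

end CountingAuto

/-- the language `Lₙ` recognized by `Aₙ ‖ ⋯ ‖ A₁` is contained in
`(ΓΣ)^{2ⁿ-1}` (accepted words strictly alternate a `Γ`-event with a `Σ`-event,
with `2ⁿ - 1` such pairs), and the projection of `Lₙ` to `Γ` is a singleton. -/
theorem counting_automata_language_shape {Sig : Type} [Fintype Sig] [Nonempty Sig]
    (n : ℕ) (hn : 1 ≤ n) :
    (∀ w ∈ (prodN (fun i : Fin n => Acount (Sig := Sig) n i)).Lm,
      ∃ l : List (Fin n × Sig), l.length = 2 ^ n - 1 ∧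
        w = (l.map fun pr => [Sum.inr pr.1, Sum.inl pr.2]).flatten) ∧
    (∃ u : List (Fin n),
      projR '' (prodN (fun i : Fin n => Acount (Sig := Sig) n i)).Lm = {u}) := by
  have hn' : 0 < n := hn
  constructor
  · intro w hw
    have hacc : AccM (fun _ : Fin n => false) w := (mem_Lm_iff w).mp hw
    obtain ⟨l, hl, hv⟩ := acc_shape hn' w.length w _ le_rfl hacc
    refine ⟨l, ?_, hl⟩
    rw [valb_bot] at hv
    omega
  · obtain ⟨σ0⟩ := ‹Nonempty Sig›
    obtain ⟨w0, hw0⟩ := acc_exists hn' σ0 (2 ^ n - 1) (fun _ => false)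
      (by rw [valb_bot, Nat.zero_add])
    refine ⟨projR w0, ?_⟩
    ext u
    simp only [Set.mem_image, Set.mem_singleton_iff]
    constructor
    · rintro ⟨w, hw, rfl⟩
      exact acc_uniq hn' w.length w w0 _ le_rfl ((mem_Lm_iff w).mp hw) hw0
    · rintro rfl
      exact ⟨w0, (mem_Lm_iff w0).mpr hw0, rfl⟩
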